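/- Let λ > 1 be a natural number, f(x) = λx mod 1 on S¹, 0 < θ < 1, and v : S¹ → ℝ continuous with M = max |v|. Let α(x) = -∑_{i=0}^∞ v(fⁱ(x)) λ^{-θ(i+1)}. Fix a natural N, 0 < δ₁ < 1 and h > 0 with δ₁ ≤ h λ^N. Then for every x ∈ S¹, |∑_{i=N+1}^∞ λ^{-θ(i+1)} (v(fⁱ(x+h)) - v(fⁱ(x)))| ≤ (2M / ((1 - λ^{-θ}) λ^{2θ} δ₁^θ)) · h^θ. -/

import Mathlib

open Real

/-- linear tail bound: for `f = E_b`, `b ∈ ℕ`, `b > 1`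
(on the line: `f^[i] x = b^i x`, `v` 1-periodic), `0 < θ < 1`, `M` a bound for `|v|`,
`0 < δ₁ < 1`, `h > 0` with `δ₁ ≤ h b^N`:
`|∑_{i≥N+1} b^{-θ(i+1)} (v(bⁱ(x+h)) - v(bⁱx))| ≤ (2M/((1-b^{-θ}) b^{2θ} δ₁^θ)) h^θ`. -/
theorem stmt6 (b : ℕ) (hb : 1 < b) (θ : ℝ) (hθ0 : 0 < θ) (hθ1 : θ < 1)
    (v : ℝ → ℝ) (hv : Continuous v) (hvper : Function.Periodic v 1)
    (M : ℝ) (hM : ∀ y, |v y| ≤ M)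
    (N : ℕ) (δ₁ h : ℝ) (hδ₁0 : 0 < δ₁) (hδ₁1 : δ₁ < 1)
    (hh : 0 < h) (hhl : δ₁ ≤ h * (b : ℝ) ^ N) (x : ℝ) :
    |∑' i : ℕ,
        (b : ℝ) ^ (-(θ * ((N : ℝ) + 1 + (i : ℝ) + 1))) *
          (v ((b : ℝ) ^ (N + 1 + i) * (x + h)) - v ((b : ℝ) ^ (N + 1 + i) * x))|
      ≤ 2 * M / ((1 - (b : ℝ) ^ (-θ)) * (b : ℝ) ^ (2 * θ) * δ₁ ^ θ) * h ^ θ := by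
  have hb1 : (1:ℝ) < (b:ℝ) := by exact_mod_cast hb
  have hb0 : (0:ℝ) < (b:ℝ) := by linarith
  set br : ℝ := (b:ℝ) ^ (-θ) with hbr
  have hr0 : 0 < br := Real.rpow_pos_of_pos hb0 _
  have hr1 : br < 1 := Real.rpow_lt_one_of_one_lt_of_neg hb1 (by linarith)
  have hM0 : 0 ≤ M := le_trans (abs_nonneg _) (hM 0)
  set F : ℕ → ℝ := fun i => (b : ℝ) ^ (-(θ * ((N : ℝ) + 1 + (i : ℝ) + 1))) *
          (v ((b : ℝ) ^ (N + 1 + i) * (x + h)) - v ((b : ℝ) ^ (N + 1 + i) * x)) with hF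
  have hterm : ∀ i : ℕ, (b:ℝ) ^ (-(θ * ((N:ℝ)+1+(i:ℝ)+1))) = br ^ (N+2+i) := by
    intro i
    rw [hbr, ← Real.rpow_natCast ((b:ℝ)^(-θ)) (N+2+i), ← Real.rpow_mul hb0.le]
    congr 1
    push_cast
    ring
  have hbound : ∀ i : ℕ, |F i| ≤ (2*M*br^(N+2)) * br ^ i := by
    intro i
    rw [hF, abs_mul, hterm i,
      abs_of_nonneg (pow_nonneg hr0.le _), pow_add]
    have h2 : |v ((b : ℝ) ^ (N + 1 + i) * (x + h)) - v ((b : ℝ) ^ (N + 1 + i) * x)| ≤ 2*M := by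
      calc |v ((b : ℝ) ^ (N + 1 + i) * (x + h)) - v ((b : ℝ) ^ (N + 1 + i) * x)|
          ≤ |v ((b : ℝ) ^ (N + 1 + i) * (x + h))| + |v ((b : ℝ) ^ (N + 1 + i) * x)| :=
            abs_sub _ _
        _ ≤ M + M := add_le_add (hM _) (hM _)
        _ = 2*M := by ring
    calc br^(N+2)*br^i * |v ((b : ℝ) ^ (N + 1 + i) * (x + h)) - v ((b : ℝ) ^ (N + 1 + i) * x)|
        ≤ br^(N+2)*br^i * (2*M) := by
          exact mul_le_mul_of_nonneg_left h2 (by positivity)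
      _ = (2*M*br^(N+2)) * br^i := by ring
  have hg : Summable (fun i : ℕ => (2*M*br^(N+2)) * br ^ i) :=
    (summable_geometric_of_lt_one hr0.le hr1).mul_left _
  have hFabs : Summable (fun i => |F i|) :=
    Summable.of_nonneg_of_le (fun i => abs_nonneg _) hbound hg
  have hFs : Summable F := hFabs.of_abs
  have hgs : ∑' i : ℕ, (2*M*br^(N+2)) * br ^ i = (2*M*br^(N+2)) * (1-br)⁻¹ := by
    rw [tsum_mul_left, tsum_geometric_of_lt_one hr0.le hr1]
  -- positivity facts
  have h1br : 0 < 1 - br := by linarith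
  have hb2θ : 0 < (b:ℝ) ^ (2*θ) := Real.rpow_pos_of_pos hb0 _
  have hδθ : 0 < δ₁ ^ θ := Real.rpow_pos_of_pos hδ₁0 _
  have hhθ : 0 < h ^ θ := Real.rpow_pos_of_pos hh _
  -- key estimate
  have h1 : δ₁ * ((b:ℝ)^(-(N:ℝ))) ≤ h := by
    rw [Real.rpow_neg hb0.le, Real.rpow_natCast, ← div_eq_mul_inv,
      div_le_iff₀ (by positivity)]
    exact hhl
  have h2 : (δ₁ * (b:ℝ)^(-(N:ℝ)))^θ ≤ h^θ :=
    Real.rpow_le_rpow (by positivity) h1 hθ0.le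
  rw [Real.mul_rpow hδ₁0.le (by positivity), ← Real.rpow_mul hb0.le] at h2
  have key : br^(N+2) ≤ h^θ/((b:ℝ)^(2*θ)*δ₁^θ) := by
    rw [le_div_iff₀ (by positivity)]
    have e1 : br^(N+2) = (b:ℝ) ^ (-(θ * ((N:ℝ)+2))) := by
      rw [hbr, ← Real.rpow_natCast ((b:ℝ)^(-θ)) (N+2), ← Real.rpow_mul hb0.le]
      congr 1
      push_cast
      ring
    rw [e1, mul_comm ((b:ℝ)^(2*θ)) (δ₁^θ), ← mul_assoc, mul_comm _ (δ₁^θ), mul_assoc,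
      ← Real.rpow_add hb0]
    have e2 : -(θ * ((N:ℝ)+2)) + 2*θ = -(N:ℝ)*θ := by ring
    rw [e2]
    exact h2
  -- put it together
  have hFabs' : Summable (fun i => ‖F i‖) := by
    simpa only [Real.norm_eq_abs] using hFabs
  have habs : |∑' i, F i| ≤ ∑' i, |F i| := by
    have := norm_tsum_le_tsum_norm hFabs'
    simpa only [Real.norm_eq_abs] using this
  calc |∑' i, F i| ≤ ∑' i, |F i| := habs
    _ ≤ ∑' i : ℕ, (2*M*br^(N+2)) * br ^ i := Summable.tsum_le_tsum hbound hFabs hg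
    _ = (2*M*(1-br)⁻¹) * br^(N+2) := by rw [hgs]; ring
    _ ≤ (2*M*(1-br)⁻¹) * (h^θ/((b:ℝ)^(2*θ)*δ₁^θ)) := by
        exact mul_le_mul_of_nonneg_left key (by positivity)
    _ = 2 * M / ((1 - br) * (b : ℝ) ^ (2 * θ) * δ₁ ^ θ) * h ^ θ := by
        field_simp
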